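/- Let ξ₁, …, ξₙ be i.i.d. Bernoulli(p) random variables with 0 < p < 1, cyclic convention ξ_{n+k} := ξ_k, and V_i := Σ_{m=1}^n (ξ_m ⋯ ξ_{m+i-1} - p^i). Then for all 1 ≤ j ≤ i with n ≥ 2i, E[V_i V_j] = n p^i (1-p) Σ_{k=0}^{j-1} (i - j + 1 + 2k) p^k. -/

import Mathlib

open MeasureTheory Finset
open MeasureTheory ProbabilityTheory Finset
open Fin.NatCast

noncomputable def bern (p : ℝ) : Measure ℝ :=
  ENNReal.ofReal p • Measure.dirac (1:ℝ) + ENNReal.ofReal (1-p) • Measure.dirac 0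

lemma bern_prob {p : ℝ} (hp0 : 0 ≤ p) (hp1 : p ≤ 1) : IsProbabilityMeasure (bern p) := by
  constructor
  simp only [bern, Measure.add_apply, Measure.smul_apply, smul_eq_mul, measure_univ, mul_one]
  rw [← ENNReal.ofReal_add hp0 (by linarith)]
  norm_num

lemma integrable_dirac' {f : ℝ → ℝ} (a : ℝ) : Integrable f (Measure.dirac a) := by
  have h : f =ᵐ[Measure.dirac a] fun _ => f a := by
    rw [MeasureTheory.ae_dirac_eq]; exact Filter.eventually_pure.2 rfl
  exact (integrable_const (f a)).congr h.symm

lemma bern_integral {p : ℝ} (hp0 : 0 ≤ p) (hp1 : p ≤ 1) (f : ℝ → ℝ) (hf : Measurable f) :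
    ∫ x, f x ∂bern p = p * f 1 + (1-p) * f 0 := by
  rw [bern, integral_add_measure ((integrable_dirac' 1).smul_measure ENNReal.ofReal_ne_top)
      ((integrable_dirac' 0).smul_measure ENNReal.ofReal_ne_top),
    integral_smul_measure, integral_smul_measure, integral_dirac, integral_dirac,
    ENNReal.toReal_ofReal hp0, ENNReal.toReal_ofReal (by linarith)]
  simp [smul_eq_mul]

lemma bern_moment {p : ℝ} (hp0 : 0 ≤ p) (hp1 : p ≤ 1) (n : ℕ) (S : Finset (Fin n)) :
    ∫ ω : Fin n → ℝ, ∏ a ∈ S, ω a ∂Measure.pi (fun _ => bern p) = p ^ S.card := by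
  haveI := bern_prob hp0 hp1
  letI : MeasureSpace ℝ := ⟨bern p⟩
  have hvol : Measure.pi (fun _ : Fin n => bern p) = (volume : Measure (Fin n → ℝ)) := rfl
  rw [hvol]
  have h1 : ∀ ω : Fin n → ℝ, ∏ a ∈ S, ω a
      = ∏ a : Fin n, (fun a x => if a ∈ S then x else 1) a (ω a) := by
    intro ω
    rw [Finset.prod_ite_mem, Finset.univ_inter]
  simp_rw [h1]
  rw [MeasureTheory.integral_fintype_prod_volume_eq_prod (fun a x => if a ∈ S then x else 1)]
  have h2 : ∀ a : Fin n, (∫ x : ℝ, (if a ∈ S then x else 1)) = if a ∈ S then p else 1 := by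
    intro a
    by_cases h : a ∈ S <;> simp only [h, if_true, if_false]
    · have := bern_integral hp0 hp1 id measurable_id
      simp at this
      exact this
    · simp
  simp_rw [h2]
  rw [Finset.prod_ite_mem, Finset.univ_inter, Finset.prod_const]




lemma bern_ae_zero_one {p : ℝ} (hp0 : 0 ≤ p) (hp1 : p ≤ 1) (n : ℕ) :
    ∀ᵐ ω : Fin n → ℝ ∂Measure.pi (fun _ => bern p), ∀ a, ω a = 0 ∨ ω a = 1 := by
  haveI := bern_prob hp0 hp1
  rw [MeasureTheory.ae_all_iff]
  intro a
  have hb : bern p {x : ℝ | ¬(x = 0 ∨ x = 1)} = 0 := by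
    simp only [bern, Measure.add_apply, Measure.smul_apply, smul_eq_mul, Measure.dirac_apply]
    have h1 : (1:ℝ) ∉ {x : ℝ | ¬(x = 0 ∨ x = 1)} := by simp
    have h0 : (0:ℝ) ∉ {x : ℝ | ¬(x = 0 ∨ x = 1)} := by simp
    rw [Set.indicator_of_notMem h1, Set.indicator_of_notMem h0]
    simp
  have := Measure.pi_eval_preimage_null (μ := fun _ : Fin n => bern p) (i := a) hb
  rw [ae_iff]
  exact this

-- measurability of products
lemma meas_prod (n : ℕ) (S : Finset (Fin n)) :
    Measurable (fun ω : Fin n → ℝ => ∏ a ∈ S, ω a) :=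
  Finset.measurable_prod S (fun a _ => measurable_pi_apply a)

lemma int_prod {p : ℝ} (hp0 : 0 ≤ p) (hp1 : p ≤ 1) (n : ℕ) (S : Finset (Fin n)) :
    Integrable (fun ω : Fin n → ℝ => ∏ a ∈ S, ω a) (Measure.pi (fun _ => bern p)) := by
  haveI := bern_prob hp0 hp1
  refine Integrable.mono' (integrable_const (1:ℝ)) (meas_prod n S).aestronglyMeasurable ?_
  filter_upwards [bern_ae_zero_one hp0 hp1 n] with ω hω
  have : ∀ a ∈ S, ω a = 0 ∨ ω a = 1 := fun a _ => hω a
  calc ‖∏ a ∈ S, ω a‖ = ∏ a ∈ S, ‖ω a‖ := by rw [norm_prod]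
    _ ≤ ∏ a ∈ S, 1 := by
        refine Finset.prod_le_prod (fun a _ => norm_nonneg _) (fun a ha => ?_)
        rcases hω a with h | h <;> simp [h]
    _ = 1 := by simp

lemma prod_mul_prod_ae {p : ℝ} (hp0 : 0 ≤ p) (hp1 : p ≤ 1) (n : ℕ) (S T : Finset (Fin n)) :
    (fun ω : Fin n → ℝ => (∏ a ∈ S, ω a) * ∏ a ∈ T, ω a)
      =ᵐ[Measure.pi (fun _ => bern p)] fun ω => ∏ a ∈ S ∪ T, ω a := by
  filter_upwards [bern_ae_zero_one hp0 hp1 n] with ω hω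
  rw [← Finset.prod_union_inter]
  by_cases h : ∀ a ∈ S ∩ T, ω a = 1
  · rw [Finset.prod_congr rfl h, Finset.prod_const_one, mul_one]
  · push_neg at h
    obtain ⟨a, haST, hane⟩ := h
    have ha0 : ω a = 0 := (hω a).resolve_right hane
    have h1 : ∏ b ∈ S ∪ T, ω b = 0 :=
      Finset.prod_eq_zero (Finset.mem_union_left T (Finset.mem_of_mem_inter_left haST)) ha0
    rw [h1, zero_mul]


variable {n : ℕ} [NeZero n]

/-- window of length k starting at m, cyclically -/
def Wnd (n : ℕ) [NeZero n] (m : Fin n) (k : ℕ) : Finset (Fin n) :=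
  (range k).image (fun l : ℕ => m + (l : Fin n))

lemma wnd_inj (m : Fin n) {k : ℕ} (hk : k ≤ n) :
    Set.InjOn (fun l : ℕ => m + (l : Fin n)) (range k) := by
  intro a ha b hb hab
  simp only [coe_range, Set.mem_Iio] at ha hb
  have : (a : Fin n) = (b : Fin n) := add_left_cancel hab
  have := congrArg Fin.val this
  rwa [Fin.val_natCast, Fin.val_natCast, Nat.mod_eq_of_lt (lt_of_lt_of_le ha hk),
    Nat.mod_eq_of_lt (lt_of_lt_of_le hb hk)] at this

lemma wnd_card (m : Fin n) {k : ℕ} (hk : k ≤ n) : (Wnd n m k).card = k := by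
  rw [Wnd, Finset.card_image_of_injOn (by simpa using wnd_inj m hk), card_range]

lemma wnd_prod (m : Fin n) (k : ℕ) (ω : Fin n → ℝ) (hk : k ≤ n) :
    ∏ l ∈ range k, ω (m + (l : Fin n)) = ∏ a ∈ Wnd n m k, ω a := by
  rw [Wnd, Finset.prod_image
    (fun a ha b hb => wnd_inj m hk (by simpa using ha) (by simpa using hb))]

lemma wnd_shift (m d : Fin n) (k : ℕ) :
    Wnd n (m + d) k = (Wnd n d k).image (fun a => m + a) := by
  rw [Wnd, Wnd, Finset.image_image]
  congr 1
  ext l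
  simp [add_assoc]

lemma wnd_union_shift (m m' : Fin n) (i j : ℕ) :
    (Wnd n m i ∪ Wnd n m' j).card = (Wnd n 0 i ∪ Wnd n (m' - m) j).card := by
  have h1 : Wnd n m i = (Wnd n 0 i).image (fun a => m + a) := by
    have := wnd_shift m 0 (n := n) i; rwa [add_zero] at this
  have h2 : Wnd n m' j = (Wnd n (m' - m) j).image (fun a => m + a) := by
    have := wnd_shift m (m' - m) (n := n) j; rwa [add_sub_cancel] at this
  rw [h1, h2, ← Finset.image_union,
    Finset.card_image_of_injective _ (add_right_injective m)]

lemma wnd_zero_mem {i : ℕ} (hi : i ≤ n) (a : Fin n) : a ∈ Wnd n 0 i ↔ a.val < i := by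
  constructor
  · rintro ha
    simp only [Wnd, mem_image, mem_range] at ha
    obtain ⟨l, hl, rfl⟩ := ha
    rw [zero_add, Fin.val_natCast]
    exact lt_of_le_of_lt (Nat.mod_le _ _) hl
  · intro ha
    simp only [Wnd, mem_image, mem_range]
    exact ⟨a.val, ha, by rw [zero_add, Fin.cast_val_eq_self]⟩

lemma wnd_inter_card {i j : ℕ} (hji : j ≤ i) (hij : i + j ≤ n) (d : Fin n) :
    (Wnd n 0 i ∩ Wnd n d j).card
      = if d.val + j ≤ n then min j (i - d.val) else d.val + j - n := by
  have hj : j ≤ n := by omega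
  have hi : i ≤ n := by omega
  have hstep1 : Wnd n 0 i ∩ Wnd n d j = (Wnd n d j).filter (fun a => a.val < i) := by
    ext a
    simp only [mem_inter, mem_filter, wnd_zero_mem hi]
    tauto
  rw [hstep1, Wnd, Finset.filter_image,
    Finset.card_image_of_injOn ((wnd_inj d hj).mono (by
      intro x hx
      simp only [coe_filter, Set.mem_setOf_eq, mem_range] at hx
      simp only [coe_range, Set.mem_Iio]
      exact hx.1))]
  have hval : ∀ l ∈ range j, ((d + (l : Fin n)).val < i ↔ (d.val + l) % n < i) := by
    intro l hl
    rw [Fin.add_def]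
    simp only [Fin.val_natCast]
    rw [Nat.mod_eq_of_lt (lt_of_lt_of_le (mem_range.1 hl) hj)]
  rw [Finset.filter_congr hval]
  have hd : d.val < n := d.isLt
  by_cases hcase : d.val + j ≤ n
  · rw [if_pos hcase]
    have : (range j).filter (fun l => (d.val + l) % n < i) = range (min j (i - d.val)) := by
      ext l
      simp only [mem_filter, mem_range, lt_min_iff]
      constructor
      · rintro ⟨hl, hmod⟩
        rw [Nat.mod_eq_of_lt (by omega)] at hmod
        omega
      · rintro ⟨hl, hli⟩
        refine ⟨hl, ?_⟩
        rw [Nat.mod_eq_of_lt (by omega)]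
        omega
    rw [this, card_range]
  · rw [if_neg hcase]
    have hDi : i < d.val := by omega
    have : (range j).filter (fun l => (d.val + l) % n < i) = Ico (n - d.val) j := by
      ext l
      simp only [mem_filter, mem_range, mem_Ico]
      constructor
      · rintro ⟨hl, hmod⟩
        by_contra hcon
        push_neg at hcon
        have hln : l < n - d.val := by omega
        rw [Nat.mod_eq_of_lt (by omega)] at hmod
        omega
      · rintro ⟨hge, hl⟩
        refine ⟨hl, ?_⟩
        rw [Nat.mod_eq_sub_mod (by omega), Nat.mod_eq_of_lt (by omega)]
        omega
    rw [this, Nat.card_Ico]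
    omega

lemma wnd_union_card {i j : ℕ} (hji : j ≤ i) (hij : i + j ≤ n) (d : Fin n) :
    (Wnd n 0 i ∪ Wnd n d j).card
      = i + j - (if d.val + j ≤ n then min j (i - d.val) else d.val + j - n) := by
  have h := Finset.card_union_add_card_inter (Wnd n 0 i) (Wnd n d j)
  rw [wnd_card _ (by omega : i ≤ n), wnd_card _ (by omega : j ≤ n),
    wnd_inter_card hji hij d] at h
  have hle : (if d.val + j ≤ n then min j (i - d.val) else d.val + j - n) ≤ j := by
    split <;> omega
  omega


lemma geom_id (p : ℝ) (m : ℕ) : (1-p) * ∑ k ∈ range m, p^k = 1 - p^m := by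
  induction m with
  | zero => simp
  | succ m ih => rw [sum_range_succ]; linear_combination ih

lemma kgeom_id (p : ℝ) (m : ℕ) :
    (1-p) * ∑ k ∈ range m, (k:ℝ) * p^k = (∑ k ∈ range m, p^k) - 1 - ((m:ℝ)-1) * p^m := by
  induction m with
  | zero => simp
  | succ m ih =>
    rw [sum_range_succ, sum_range_succ]
    push_cast
    linear_combination ih

lemma sum_identity (p : ℝ) (i j n : ℕ) (hj : 1 ≤ j) (hji : j ≤ i) (hn : 2*i ≤ n) :
    ∑ D ∈ range n,
        (p ^ (i + j - (if D + j ≤ n then min j (i - D) else D + j - n)) - p^(i+j))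
      = p^i * (1-p) * ∑ k ∈ range j, ((i:ℝ) - (j:ℝ) + 1 + 2*(k:ℝ)) * p^k := by
  obtain ⟨m, rfl⟩ : ∃ m, j = m + 1 := ⟨j - 1, by omega⟩
  set f : ℕ → ℝ := fun D =>
    p ^ (i + (m+1) - (if D + (m+1) ≤ n then min (m+1) (i - D) else D + (m+1) - n)) - p^(i+(m+1))
    with hf
  have h1 : i - m ≤ i := by omega
  have h2 : i ≤ n - m := by omega
  have h3 : n - m ≤ n := by omega
  rw [range_eq_Ico,
    ← Finset.sum_Ico_consecutive f (Nat.zero_le (i-m)) (le_trans h1 (le_trans h2 h3)),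
    ← Finset.sum_Ico_consecutive f h1 (le_trans h2 h3),
    ← Finset.sum_Ico_consecutive f h2 h3]
  have piece1 : ∑ D ∈ Ico 0 (i-m), f D = ((i:ℝ) - (m:ℝ)) * (p^i - p^(i+(m+1))) := by
    have hterm : ∀ D ∈ Ico 0 (i-m), f D = p^i - p^(i+(m+1)) := by
      intro D hD
      simp only [mem_Ico] at hD
      have hc : D + (m+1) ≤ n := by omega
      simp only [hf]
      rw [if_pos hc, min_eq_left (by omega), (by omega : i + (m+1) - (m+1) = i)]
    rw [Finset.sum_congr rfl hterm, Finset.sum_const, ← range_eq_Ico, card_range,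
      nsmul_eq_mul, Nat.cast_sub (by omega)]
  have piece2 : ∑ D ∈ Ico (i-m) i, f D
      = ∑ k ∈ range m, (p^(i+1+k) - p^(i+(m+1))) := by
    rw [Finset.sum_Ico_eq_sum_range, (by omega : i - (i - m) = m)]
    refine Finset.sum_congr rfl (fun k hk => ?_)
    simp only [mem_range] at hk
    have hc : i - m + k + (m+1) ≤ n := by omega
    simp only [hf]
    rw [if_pos hc, min_eq_right (by omega),
      (by omega : i + (m+1) - (i - (i - m + k)) = i + 1 + k)]
  have piece3 : ∑ D ∈ Ico i (n-m), f D = 0 := by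
    have hterm : ∀ D ∈ Ico i (n-m), f D = 0 := by
      intro D hD
      simp only [mem_Ico] at hD
      have hc : D + (m+1) ≤ n := by omega
      simp only [hf]
      rw [if_pos hc, min_eq_right (by omega), (by omega : i - D = 0)]
      simp
    rw [Finset.sum_congr rfl hterm, Finset.sum_const_zero]
  have piece4 : ∑ D ∈ Ico (n-m) n, f D
      = ∑ k ∈ range m, (p^(i+1+k) - p^(i+(m+1))) := by
    rw [Finset.sum_Ico_eq_sum_range, (by omega : n - (n - m) = m), ← Finset.sum_range_reflect]
    refine Finset.sum_congr rfl (fun k hk => ?_)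
    simp only [mem_range] at hk
    have hc : ¬ (n - m + (m - 1 - k) + (m+1) ≤ n) := by omega
    simp only [hf]
    rw [if_neg hc,
      (by omega : i + (m+1) - (n - m + (m - 1 - k) + (m+1) - n) = i + 1 + k)]
  rw [piece1, piece2, piece3, piece4]
  have hs2 : ∑ k ∈ range m, (p^(i+1+k) - p^(i+(m+1)))
      = p^(i+1) * (∑ k ∈ range m, p^k) - (m:ℝ) * p^(i+(m+1)) := by
    rw [Finset.sum_sub_distrib, Finset.sum_const, card_range, nsmul_eq_mul]
    congr 1
    rw [Finset.mul_sum]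
    exact Finset.sum_congr rfl fun k _ => pow_add p (i+1) k
  rw [hs2]
  have heq : ∀ k ∈ range (m+1), ((i:ℝ) - ((m+1 : ℕ):ℝ) + 1 + 2*(k:ℝ)) * p^k
      = ((i:ℝ)-(m:ℝ))*p^k + 2*((k:ℝ)*p^k) := by
    intro k _; push_cast; ring
  rw [Finset.sum_congr rfl heq, Finset.sum_add_distrib, ← Finset.mul_sum, ← Finset.mul_sum]
  have hgeomj := geom_id p (m+1)
  have hkgeomj := kgeom_id p (m+1)
  have hGS : ∑ k ∈ range (m+1), p^k = 1 + p * ∑ k ∈ range m, p^k := by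
    rw [geom_sum_succ, add_comm]
  push_cast at hkgeomj
  linear_combination (-(((i:ℝ) - (m:ℝ)) * p^i)) * hgeomj + (-(2*p^i)) * hkgeomj
    + (-(2*p^i)) * hGS

/-- For i.i.d. Bernoulli(p) with cyclic convention and `V_i` the centered number
of i-runs, for `1 ≤ j ≤ i` and `n ≥ 2i`:
`E[V_i V_j] = n p^i (1-p) ∑_{k=0}^{j-1} (i - j + 1 + 2k) p^k`. -/
theorem runs_mixed_moment
    (n i j : ℕ) [NeZero n] (hj : 1 ≤ j) (hji : j ≤ i) (hn : 2 * i ≤ n)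
    (p : ℝ) (hp0 : 0 < p) (hp1 : p < 1) :
    ∫ ω : Fin n → ℝ,
        (∑ m : Fin n, ((∏ l ∈ Finset.range i, ω (m + (l : Fin n))) - p ^ i)) *
        (∑ m : Fin n, ((∏ l ∈ Finset.range j, ω (m + (l : Fin n))) - p ^ j))
      ∂(Measure.pi fun _ : Fin n =>
          ENNReal.ofReal p • Measure.dirac (1 : ℝ) + ENNReal.ofReal (1 - p) • Measure.dirac 0)
    = n * p ^ i * (1 - p) *
        ∑ k ∈ Finset.range j, ((i : ℝ) - (j : ℝ) + 1 + 2 * (k : ℝ)) * p ^ k := by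
  have hp0' : (0:ℝ) ≤ p := le_of_lt hp0
  have hp1' : p ≤ 1 := le_of_lt hp1
  have hi1 : 1 ≤ i := le_trans hj hji
  have hin : i ≤ n := by omega
  have hjn : j ≤ n := by omega
  have hijn : i + j ≤ n := by omega
  haveI := bern_prob hp0' hp1'
  set μn := Measure.pi (fun _ : Fin n => bern p) with hμn
  show (∫ ω : Fin n → ℝ,
        (∑ m : Fin n, ((∏ l ∈ Finset.range i, ω (m + (l : Fin n))) - p ^ i)) *
        (∑ m : Fin n, ((∏ l ∈ Finset.range j, ω (m + (l : Fin n))) - p ^ j)) ∂μn) = _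
  have hrw : ∀ ω : Fin n → ℝ,
      (∑ m : Fin n, ((∏ l ∈ Finset.range i, ω (m + (l : Fin n))) - p ^ i)) *
      (∑ m : Fin n, ((∏ l ∈ Finset.range j, ω (m + (l : Fin n))) - p ^ j))
      = ∑ m : Fin n, ∑ m' : Fin n,
          ((∏ a ∈ Wnd n m i, ω a) - p^i) * ((∏ a ∈ Wnd n m' j, ω a) - p^j) := by
    intro ω
    rw [Finset.sum_mul_sum]
    exact Finset.sum_congr rfl fun m _ => Finset.sum_congr rfl fun m' _ => by
      rw [wnd_prod m i ω hin, wnd_prod m' j ω hjn]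
  rw [integral_congr_ae (Filter.Eventually.of_forall hrw)]
  have hnorm_le : ∀ (ω : Fin n → ℝ), (∀ a, ω a = 0 ∨ ω a = 1) →
      ∀ S : Finset (Fin n), ‖∏ a ∈ S, ω a‖ ≤ 1 := by
    intro ω hω S
    calc ‖∏ a ∈ S, ω a‖ = ∏ a ∈ S, ‖ω a‖ := by rw [norm_prod]
      _ ≤ ∏ a ∈ S, 1 := by
          refine Finset.prod_le_prod (fun a _ => norm_nonneg _) (fun a _ => ?_)
          rcases hω a with h | h <;> simp [h]
      _ = 1 := by simp
  have hterm_int : ∀ (S T : Finset (Fin n)),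
      Integrable (fun ω : Fin n → ℝ =>
        ((∏ a ∈ S, ω a) - p^i) * ((∏ a ∈ T, ω a) - p^j)) μn := by
    intro S T
    refine Integrable.mono' (integrable_const ((1 + p^i)*(1 + p^j)))
      (((meas_prod n S).sub measurable_const).mul
        ((meas_prod n T).sub measurable_const)).aestronglyMeasurable ?_
    filter_upwards [bern_ae_zero_one hp0' hp1' n] with ω hω
    rw [norm_mul]
    have h1 : ‖(∏ a ∈ S, ω a) - p^i‖ ≤ 1 + p^i :=
      le_trans (norm_sub_le _ _) (by
        have := hnorm_le ω hω S
        have hpi : ‖p^i‖ = p^i := Real.norm_of_nonneg (pow_nonneg hp0' i)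
        rw [hpi]; linarith)
    have h2 : ‖(∏ a ∈ T, ω a) - p^j‖ ≤ 1 + p^j :=
      le_trans (norm_sub_le _ _) (by
        have := hnorm_le ω hω T
        have hpj : ‖p^j‖ = p^j := Real.norm_of_nonneg (pow_nonneg hp0' j)
        rw [hpj]; linarith)
    have hb1 : (0:ℝ) ≤ 1 + p^j := by positivity
    exact mul_le_mul h1 h2 (norm_nonneg _) (by positivity)
  rw [integral_finset_sum Finset.univ
    (fun m _ => integrable_finset_sum Finset.univ (fun m' _ => hterm_int _ _))]
  have hterm_val : ∀ S T : Finset (Fin n), S.card = i → T.card = j →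
      ∫ ω : Fin n → ℝ, ((∏ a ∈ S, ω a) - p^i) * ((∏ a ∈ T, ω a) - p^j) ∂μn
        = p^((S ∪ T).card) - p^(i+j) := by
    intro S T hS hT
    have hexp : ∀ ω : Fin n → ℝ,
        ((∏ a ∈ S, ω a) - p^i) * ((∏ a ∈ T, ω a) - p^j)
        = ((∏ a ∈ S, ω a) * (∏ a ∈ T, ω a) - p^j * (∏ a ∈ S, ω a)
            - p^i * (∏ a ∈ T, ω a)) + p^i * p^j := fun ω => by ring
    rw [integral_congr_ae (Filter.Eventually.of_forall hexp)]
    have hST : Integrable (fun ω : Fin n → ℝ => (∏ a ∈ S, ω a) * (∏ a ∈ T, ω a)) μn :=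
      (int_prod hp0' hp1' n (S ∪ T)).congr (prod_mul_prod_ae hp0' hp1' n S T).symm
    have hIS := int_prod hp0' hp1' n S
    have hIT := int_prod hp0' hp1' n T
    have h4 : Integrable (fun ω : Fin n → ℝ =>
        (∏ a ∈ S, ω a) * (∏ a ∈ T, ω a) - p^j * ∏ a ∈ S, ω a) μn :=
      hST.sub (hIS.const_mul _)
    have h5 : Integrable (fun ω : Fin n → ℝ =>
        (∏ a ∈ S, ω a) * (∏ a ∈ T, ω a) - p^j * (∏ a ∈ S, ω a)
          - p^i * ∏ a ∈ T, ω a) μn :=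
      h4.sub (hIT.const_mul _)
    rw [integral_add h5 (integrable_const _),
      integral_sub h4 (hIT.const_mul _),
      integral_sub hST (hIS.const_mul _),
      integral_const_mul, integral_const_mul, integral_const,
      integral_congr_ae (prod_mul_prod_ae hp0' hp1' n S T),
      bern_moment hp0' hp1' n (S ∪ T), bern_moment hp0' hp1' n S,
      bern_moment hp0' hp1' n T, hS, hT]
    simp only [probReal_univ, ENNReal.toReal_one, smul_eq_mul, one_mul]
    rw [pow_add]
    ring
  have hstep : ∀ m : Fin n,
      (∫ ω : Fin n → ℝ, ∑ m' : Fin n,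
        ((∏ a ∈ Wnd n m i, ω a) - p^i) * ((∏ a ∈ Wnd n m' j, ω a) - p^j) ∂μn)
      = ∑ d : Fin n, (p^((Wnd n 0 i ∪ Wnd n d j).card) - p^(i+j)) := by
    intro m
    rw [integral_finset_sum Finset.univ (fun m' _ => hterm_int _ _)]
    have h1 : ∀ m' : Fin n,
        (∫ ω : Fin n → ℝ, ((∏ a ∈ Wnd n m i, ω a) - p^i) * ((∏ a ∈ Wnd n m' j, ω a) - p^j) ∂μn)
        = p^((Wnd n 0 i ∪ Wnd n (m' - m) j).card) - p^(i+j) := by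
      intro m'
      rw [hterm_val _ _ (wnd_card m hin) (wnd_card m' hjn), wnd_union_shift]
    rw [Finset.sum_congr rfl (fun m' _ => h1 m')]
    exact Fintype.sum_equiv (Equiv.subRight m) _ _ (fun m' => rfl)
  rw [Finset.sum_congr rfl (fun m _ => hstep m), Finset.sum_const, Finset.card_univ,
    Fintype.card_fin, nsmul_eq_mul]
  have hcard : ∀ d : Fin n, (Wnd n 0 i ∪ Wnd n d j).card
      = i + j - (if d.val + j ≤ n then min j (i - d.val) else d.val + j - n) :=
    wnd_union_card hji hijn
  simp_rw [hcard]
  rw [Fin.sum_univ_eq_sum_range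
    (fun D => p^(i + j - (if D + j ≤ n then min j (i - D) else D + j - n)) - p^(i+j)) n]
  rw [sum_identity p i j n hj hji hn]
  ring
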